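/- Let x ∈ ℝ with x ≠ 0 and 3x² ≠ 1. Then the equation (2(2x²−1−x)(x−1)/(x(3x²−1)) − 3)² = 1 + 4(x−1)²(1−x²)/(3x²−1)² holds if and only if x ∈ {−1, (−1−√5)/2, (√5−1)/2, (1−√6)/5, (1+√6)/5}; equivalently, for such x the equation is equivalent to (x+1)²·(x−(−1−√5)/2)·(x−(√5−1)/2)·(x−(1−√6)/5)·(x−(1+√6)/5) = 0. -/

import Mathlib

/-- for real `x` with `x ≠ 0` and `3x² ≠ 1`, the equation
`(2(2x²−1−x)(x−1)/(x(3x²−1)) − 3)² = 1 + 4(x−1)²(1−x²)/(3x²−1)²` holds iff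
`x ∈ {−1, (−1−√5)/2, (√5−1)/2, (1−√6)/5, (1+√6)/5}`, equivalently iff
`(x+1)²(x−(−1−√5)/2)(x−(√5−1)/2)(x−(1−√6)/5)(x−(1+√6)/5) = 0`. -/
theorem stmt13 (x : ℝ) (hx : x ≠ 0) (hx3 : 3 * x^2 ≠ 1) :
    ((2 * (2*x^2 - 1 - x) * (x - 1) / (x * (3*x^2 - 1)) - 3)^2
        = 1 + 4 * (x - 1)^2 * (1 - x^2) / (3*x^2 - 1)^2
      ↔ (x = -1 ∨ x = (-1 - Real.sqrt 5)/2 ∨ x = (Real.sqrt 5 - 1)/2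
          ∨ x = (1 - Real.sqrt 6)/5 ∨ x = (1 + Real.sqrt 6)/5))
    ∧ ((2 * (2*x^2 - 1 - x) * (x - 1) / (x * (3*x^2 - 1)) - 3)^2
        = 1 + 4 * (x - 1)^2 * (1 - x^2) / (3*x^2 - 1)^2
      ↔ (x + 1)^2 * (x - (-1 - Real.sqrt 5)/2) * (x - (Real.sqrt 5 - 1)/2)
          * (x - (1 - Real.sqrt 6)/5) * (x - (1 + Real.sqrt 6)/5) = 0) := by
  have h5 : Real.sqrt 5 ^ 2 = 5 := Real.sq_sqrt (by norm_num)
  have h6 : Real.sqrt 6 ^ 2 = 6 := Real.sq_sqrt (by norm_num)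
  have hd2 : 3 * x ^ 2 - 1 ≠ 0 := sub_ne_zero.mpr hx3
  have e1 : (x - (-1 - Real.sqrt 5)/2) * (x - (Real.sqrt 5 - 1)/2) = x^2 + x - 1 := by
    linear_combination (-(1:ℝ)/4) * h5
  have e2 : (x - (1 - Real.sqrt 6)/5) * (x - (1 + Real.sqrt 6)/5)
      = (5*x^2 - 2*x - 1)/5 := by
    linear_combination (-(1:ℝ)/25) * h6
  have hfac : (x + 1)^2 * (x - (-1 - Real.sqrt 5)/2) * (x - (Real.sqrt 5 - 1)/2)
      * (x - (1 - Real.sqrt 6)/5) * (x - (1 + Real.sqrt 6)/5)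
      = (x + 1)^2 * (x^2 + x - 1) * (5*x^2 - 2*x - 1) / 5 := by
    rw [show (x + 1)^2 * (x - (-1 - Real.sqrt 5)/2) * (x - (Real.sqrt 5 - 1)/2)
        * (x - (1 - Real.sqrt 6)/5) * (x - (1 + Real.sqrt 6)/5)
        = (x + 1)^2 * ((x - (-1 - Real.sqrt 5)/2) * (x - (Real.sqrt 5 - 1)/2))
          * ((x - (1 - Real.sqrt 6)/5) * (x - (1 + Real.sqrt 6)/5)) from by ring,
      e1, e2]
    ring
  have hQ : ((2 * (2*x^2 - 1 - x) * (x - 1) / (x * (3*x^2 - 1)) - 3)^2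
        = 1 + 4 * (x - 1)^2 * (1 - x^2) / (3*x^2 - 1)^2)
      ↔ (x + 1)^2 * (x^2 + x - 1) * (5*x^2 - 2*x - 1) = 0 := by
    rw [div_sub' (mul_ne_zero hx hd2), div_pow, add_div' _ _ _ (pow_ne_zero 2 hd2),
      div_eq_div_iff (by positivity) (by positivity)]
    constructor
    · intro h
      have h4 : 4 * ((x + 1)^2 * (x^2 + x - 1) * (5*x^2 - 2*x - 1)) * (3*x^2-1)^2 = 0 := by
        linear_combination h
      have := mul_eq_zero.mp h4
      rcases this with h' | h'
      · linarith [mul_eq_zero.mp h' |>.resolve_left (by norm_num)]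
      · exact absurd h' (pow_ne_zero 2 hd2)
    · intro h
      linear_combination 4 * (3*x^2-1)^2 * h
  constructor
  · rw [hQ]
    constructor
    · intro h
      rcases mul_eq_zero.mp h with h' | h'
      · rcases mul_eq_zero.mp h' with h'' | h''
        · left
          have := pow_eq_zero_iff (n := 2) (by norm_num) |>.mp h''
          linarith
        · rw [← e1] at h''
          rcases mul_eq_zero.mp h'' with h3 | h3
          · right; left; linarith [sub_eq_zero.mp h3]
          · right; right; left; linarith [sub_eq_zero.mp h3]
      · have h'' : (x - (1 - Real.sqrt 6)/5) * (x - (1 + Real.sqrt 6)/5) = 0 := by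
          rw [e2, h']; ring
        rcases mul_eq_zero.mp h'' with h3 | h3
        · right; right; right; left; linarith [sub_eq_zero.mp h3]
        · right; right; right; right; linarith [sub_eq_zero.mp h3]
    · rintro (rfl | rfl | rfl | rfl | rfl)
      · ring
      · linear_combination (5/64 + Real.sqrt 5/16 - 9*Real.sqrt 5^2/32
          + Real.sqrt 5^3/16 + 5*Real.sqrt 5^4/64) * h5
      · linear_combination (5/64 - Real.sqrt 5/16 - 9*Real.sqrt 5^2/32
          - Real.sqrt 5^3/16 + 5*Real.sqrt 5^4/64) * h5
      · linear_combination (-684/3125 - 24*Real.sqrt 6/3125 + 101*Real.sqrt 6^2/3125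
          - 19*Real.sqrt 6^3/3125 + Real.sqrt 6^4/3125) * h6
      · linear_combination (-684/3125 + 24*Real.sqrt 6/3125 + 101*Real.sqrt 6^2/3125
          + 19*Real.sqrt 6^3/3125 + Real.sqrt 6^4/3125) * h6
  · rw [hQ, hfac, div_eq_zero_iff]
    constructor
    · intro h; exact Or.inl h
    · rintro (h | h)
      · exact h
      · norm_num at h
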